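/- For all n ≥ 0 and r ≥ 1, the r-Bell numbers satisfy B_{n+1,r} = r·B_{n,r} + B_{n,r+1}. -/
import Mathlib


open Finset

/-- The r-Stirling numbers of the second kind `S_r(n,k)`. -/
def rStirling2 (r : ℕ) : ℕ → ℕ → ℕ
  | 0, 0 => 1
  | 0, _ + 1 => 0
  | n + 1, 0 => r * rStirling2 r n 0
  | n + 1, k + 1 => rStirling2 r n k + (k + 1 + r) * rStirling2 r n (k + 1)

/-- The r-Bell numbers `B_{n,r}`. -/
def rBell (n r : ℕ) : ℕ := ∑ k ∈ range (n + 1), rStirling2 r n k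

lemma rStirling2_eq_zero (r : ℕ) : ∀ n k, n < k → rStirling2 r n k = 0 := by
  intro n
  induction n with
  | zero => intro k hk; match k, hk with | k + 1, _ => rfl
  | succ n ih =>
    intro k hk
    match k, hk with
    | k + 1, hk =>
      have h1 : n < k := Nat.lt_of_succ_lt_succ hk
      have h2 : n < k + 1 := Nat.lt_succ_of_lt h1
      show rStirling2 r n k + (k + 1 + r) * rStirling2 r n (k + 1) = 0
      rw [ih k h1, ih (k + 1) h2]; simp

lemma rStirling2_shift (r : ℕ) : ∀ n k,
    rStirling2 (r + 1) n k = rStirling2 r n k + (k + 1) * rStirling2 r n (k + 1) := by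
  intro n
  induction n with
  | zero =>
    intro k
    match k with
    | 0 => simp [rStirling2]
    | k + 1 => simp [rStirling2]
  | succ n ih =>
    intro k
    match k with
    | 0 =>
      show (r + 1) * rStirling2 (r + 1) n 0 = _
      rw [ih 0]
      show _ = r * rStirling2 r n 0 + 1 * (rStirling2 r n 0 + (0 + 1 + r) * rStirling2 r n (0 + 1))
      ring
    | k + 1 =>
      show rStirling2 (r + 1) n k + (k + 1 + (r + 1)) * rStirling2 (r + 1) n (k + 1) = _
      rw [ih k, ih (k + 1)]
      show _ = (rStirling2 r n k + (k + 1 + r) * rStirling2 r n (k + 1)) +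
        (k + 1 + 1) * (rStirling2 r n (k + 1) + (k + 1 + 1 + r) * rStirling2 r n (k + 1 + 1))
      ring

theorem rBell_succ (n r : ℕ) (hr : 1 ≤ r) :
    rBell (n + 1) r = r * rBell n r + rBell n (r + 1) := by
  unfold rBell
  have h1 : ∑ k ∈ range (n + 2), rStirling2 r (n + 1) k =
      (∑ k ∈ range (n + 1), rStirling2 r (n + 1) (k + 1)) + rStirling2 r (n + 1) 0 :=
    Finset.sum_range_succ' _ _
  rw [h1]
  have h2 : ∀ k, rStirling2 r (n + 1) (k + 1) =
      rStirling2 r n k + (k + 1 + r) * rStirling2 r n (k + 1) := fun k => rfl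
  have h3 : rStirling2 r (n + 1) 0 = r * rStirling2 r n 0 := rfl
  simp only [h2, h3, rStirling2_shift r n]
  rw [Finset.sum_add_distrib, Finset.sum_add_distrib, Finset.mul_sum]
  have h4 : ∑ k ∈ range (n + 1), (k + 1 + r) * rStirling2 r n (k + 1) =
      ∑ k ∈ range (n + 1), ((k + 1) * rStirling2 r n (k + 1) + r * rStirling2 r n (k + 1)) := by
    apply Finset.sum_congr rfl; intro k _; ring
  rw [h4, Finset.sum_add_distrib]
  have h5 : ∑ k ∈ range (n + 1), r * rStirling2 r n (k + 1) + r * rStirling2 r n 0 =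
      ∑ k ∈ range (n + 1), r * rStirling2 r n k := by
    rw [Finset.sum_range_succ' (fun k => r * rStirling2 r n k) n,
      Finset.sum_range_succ (fun k => r * rStirling2 r n (k + 1)) n,
      rStirling2_eq_zero r n (n + 1) (Nat.lt_succ_self n), mul_zero, add_zero]
  omega
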